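/- Let (.|.) be a nonzero skew-symmetric bilinear form on a two-dimensional vector space V and define γ_{u,v}(w) = (u|w)v + (v|w)u. Then for any traceless endomorphism f of V and any u, v ∈ V, trace(f ∘ γ_{u,v}) = 2(u | f(v)). -/

import Mathlib

/-- `γ_{u,v} : w ↦ (u|w)v + (v|w)u`. -/
noncomputable def gammaMap {F : Type*} [Field F] {V : Type*} [AddCommGroup V] [Module F V]
    (B : V →ₗ[F] V →ₗ[F] F) (u v : V) : V →ₗ[F] V :=
  (B u).smulRight v + (B v).smulRight u

theorem trace_f_gamma
    (F : Type*) [Field F] (h2 : (2 : F) ≠ 0)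
    (V : Type*) [AddCommGroup V] [Module F V] [FiniteDimensional F V]
    (hdim : Module.finrank F V = 2)
    (B : V →ₗ[F] V →ₗ[F] F)
    (halt : ∀ v : V, B v v = 0)
    (hne : B ≠ 0)
    (f : V →ₗ[F] V)
    (hf : LinearMap.trace F V f = 0)
    (u v : V) :
    LinearMap.trace F V (f ∘ₗ gammaMap B u v) = 2 * B u (f v) := by
  classical
  let b : Module.Basis (Fin 2) F V := Module.finBasisOfFinrankEq F V hdim
  have hx : ∀ x : V, x = b.repr x 0 • b 0 + b.repr x 1 • b 1 := by
    intro x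
    have := b.sum_repr x
    rw [Fin.sum_univ_two] at this
    exact this.symm
  have hskew : ∀ x y : V, B y x = -B x y := by
    intro x y
    have h := halt (x + y)
    simp only [map_add, LinearMap.add_apply, halt] at h
    linear_combination h
  -- trace formula
  have htr : ∀ g : V →ₗ[F] V,
      LinearMap.trace F V g = b.repr (g (b 0)) 0 + b.repr (g (b 1)) 1 := by
    intro g
    rw [LinearMap.trace_eq_matrix_trace F b g, Matrix.trace, Fin.sum_univ_two]
    simp [Matrix.diag, LinearMap.toMatrix_apply]
  set a := B (b 0) (b 1) with ha
  have hB : ∀ x y : V,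
      B x y = (b.repr x 0 * b.repr y 1 - b.repr x 1 * b.repr y 0) * a := by
    intro x y
    conv_lhs => rw [hx x, hx y]
    simp only [map_add, map_smul, LinearMap.add_apply, LinearMap.smul_apply, smul_eq_mul,
      halt, ← ha, hskew (b 0) (b 1)]
    ring_nf
  set p := b.repr (f (b 0)) 0 with hp
  set q := b.repr (f (b 0)) 1 with hq
  set r := b.repr (f (b 1)) 0 with hr
  set s := b.repr (f (b 1)) 1 with hs
  have hf' : p + s = 0 := by rw [← hf, htr f]
  have hfv : ∀ x : V, b.repr (f x) 0 = b.repr x 0 * p + b.repr x 1 * r ∧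
      b.repr (f x) 1 = b.repr x 0 * q + b.repr x 1 * s := by
    intro x
    constructor <;>
    · conv_lhs => rw [hx x]
      simp [map_add, map_smul, hp, hq, hr, hs]
  rw [htr]
  have hgam : ∀ w : V, (f ∘ₗ gammaMap B u v) w = B u w • f v + B v w • f u := by
    intro w
    simp [gammaMap, map_add, map_smul]
  rw [hgam (b 0), hgam (b 1)]
  simp only [map_add, map_smul, Finsupp.add_apply, Finsupp.smul_apply, smul_eq_mul]
  rw [hB u (b 0), hB u (b 1), hB v (b 0), hB v (b 1), hB u (f v),
    (hfv v).1, (hfv v).2, (hfv u).1, (hfv u).2]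
  have h00 : b.repr (b 0) 0 = 1 := by simp
  have h01 : (b.repr (b 0)) 1 = 0 := by simp [Finsupp.single_apply, b.repr_self]
  have h10 : (b.repr (b 1)) 0 = 0 := by simp [Finsupp.single_apply, b.repr_self]
  have h11 : b.repr (b 1) 1 = 1 := by simp
  rw [h00, h01, h10, h11]
  linear_combination ((b.repr u 1 * b.repr v 0 - b.repr u 0 * b.repr v 1) * a) * hf'
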